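/- Let F ⊆ 2^[n] be B_d-free, and for 0 ≤ a ≤ b ≤ n let F(a,b) = {A ∈ F : a ≤ |A| ≤ b}. Then h_n(F(a,b)) ≤ α_d(b-a), provided b - a ≥ d, where α_d is defined by α_1(n)=1 and α_{d+1}(n)=1/2+sqrt(2n·α_d(n)+1/4). -/

import Mathlib

/-- The Lubell function of a family of subsets of `[n]`. -/
noncomputable def lubell (n : ℕ) (F : Finset (Finset (Fin n))) : ℝ :=
  ∑ A ∈ F, 1 / (n.choose A.card : ℝ)

/-- `F` contains a `d`-dimensional Boolean algebra: there are pairwise disjoint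
`X₀, X₁, …, X_d` with `X₁, …, X_d` nonempty such that every union
`X₀ ∪ ⋃_{i ∈ I} X_i` belongs to `F`. -/
def ContainsBD (n d : ℕ) (F : Finset (Finset (Fin n))) : Prop :=
  ∃ (X₀ : Finset (Fin n)) (X : Fin d → Finset (Fin n)),
    (∀ i, (X i).Nonempty) ∧
    (∀ i, Disjoint X₀ (X i)) ∧
    (∀ i j, i ≠ j → Disjoint (X i) (X j)) ∧
    ∀ I : Finset (Fin d), X₀ ∪ I.biUnion X ∈ F

open Finset


noncomputable def alpha (n : ℕ) : ℕ → ℝ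
  | 0 => 1
  | 1 => 1
  | (d + 2) => 1 / 2 + Real.sqrt (2 * n * alpha n (d + 1) + 1 / 4)

lemma alpha_succ (n d : ℕ) (hd : 1 ≤ d) :
    alpha n (d + 1) = 1 / 2 + Real.sqrt (2 * n * alpha n d + 1 / 4) := by
  obtain ⟨e, rfl⟩ := Nat.exists_eq_add_of_le' hd
  rfl

lemma alpha_nonneg (n d : ℕ) : 0 ≤ alpha n d := by
  cases d with
  | zero => norm_num [alpha]
  | succ d =>
    rcases Nat.eq_zero_or_pos d with rfl | hd
    · norm_num [alpha]
    · rw [alpha_succ n d hd]; positivity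

lemma alpha_one_le (n d : ℕ) : 1 ≤ alpha n d := by
  cases d with
  | zero => norm_num [alpha]
  | succ d =>
    rcases Nat.eq_zero_or_pos d with rfl | hd
    · norm_num [alpha]
    · rw [alpha_succ n d hd]
      have h1 : (1/4 : ℝ) ≤ 2 * n * alpha n d + 1/4 := by
        nlinarith [alpha_nonneg n d, Nat.cast_nonneg (α := ℝ) n]
      have h2 : Real.sqrt (1/4) = 1/2 := by
        rw [show (1/4 : ℝ) = (1/2)^2 by norm_num, Real.sqrt_sq (by norm_num)]
      nlinarith [Real.sqrt_le_sqrt h1]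

lemma alpha_mono_n {n n' : ℕ} (h : n ≤ n') (d : ℕ) : alpha n d ≤ alpha n' d := by
  cases d with
  | zero => simp [alpha]
  | succ d =>
    induction d with
    | zero => simp [alpha]
    | succ d ih =>
      rw [alpha_succ n (d+1) (by omega), alpha_succ n' (d+1) (by omega)]
      have hle : 2 * (n:ℝ) * alpha n (d+1) + 1/4 ≤ 2 * n' * alpha n' (d+1) + 1/4 := by
        have hn : (n:ℝ) ≤ n' := by exact_mod_cast h
        nlinarith [alpha_nonneg n (d+1), alpha_nonneg n' (d+1),
          Nat.cast_nonneg (α := ℝ) n, ih]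
      nlinarith [Real.sqrt_le_sqrt hle]

lemma alpha_ge_d {n d : ℕ} (hd : 1 ≤ d) (hdn : d ≤ n) : (d : ℝ) ≤ alpha n d := by
  induction d with
  | zero => omega
  | succ d ih =>
    rcases Nat.eq_zero_or_pos d with rfl | hd'
    · simpa using alpha_one_le n 1
    · rw [alpha_succ n d hd']
      have ihd : (d:ℝ) ≤ alpha n d := ih hd' (by omega)
      have hn : (d:ℝ) + 1 ≤ (n:ℝ) := by exact_mod_cast hdn
      have hd1 : (1:ℝ) ≤ (d:ℝ) := by exact_mod_cast hd'
      have key : ((d:ℝ) + 1/2)^2 ≤ 2 * n * alpha n d + 1/4 := by nlinarith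
      have := Real.sqrt_le_sqrt key
      rw [Real.sqrt_sq (by positivity)] at this
      push_cast
      linarith

lemma le_alpha_of_quad {n d : ℕ} (hd : 1 ≤ d) {h : ℝ}
    (hq : h^2 - h ≤ 2 * n * alpha n d) : h ≤ alpha n (d+1) := by
  rw [alpha_succ n d hd]
  have key : (h - 1/2)^2 ≤ 2 * n * alpha n d + 1/4 := by nlinarith
  have h1 : h - 1/2 ≤ Real.sqrt (2 * n * alpha n d + 1/4) := by
    calc h - 1/2 ≤ |h - 1/2| := le_abs_self _
    _ = Real.sqrt ((h-1/2)^2) := (Real.sqrt_sq_eq_abs _).symm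
    _ ≤ _ := Real.sqrt_le_sqrt key
  linarith



-- trivial bound
lemma rlub_trivial {n : ℕ} (S : Finset (Fin n)) (F : Finset (Finset (Fin n)))
    (hFS : ∀ A ∈ F, A ⊆ S) :
    ∑ A ∈ F, 1 / ((S.card.choose A.card : ℝ)) ≤ S.card + 1 := by
  classical
  set s := S.card with hs
  have hmap : ∀ A ∈ F, A.card ∈ Finset.range (s+1) := by
    intro A hA
    simp only [Finset.mem_range]
    exact Nat.lt_succ_of_le (card_le_card (hFS A hA))
  rw [← Finset.sum_fiberwise_of_maps_to hmap]
  have : ∀ k ∈ Finset.range (s+1),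
      (∑ A ∈ F.filter (fun A => A.card = k), 1 / ((s.choose A.card : ℝ))) ≤ 1 := by
    intro k hk
    have hk' : k ≤ s := Nat.lt_succ_iff.mp (Finset.mem_range.mp hk)
    have hpos : 0 < (s.choose k : ℝ) := by
      exact_mod_cast Nat.choose_pos hk'
    have hcard : (F.filter (fun A => A.card = k)).card ≤ s.choose k := by
      rw [← Finset.card_powersetCard k S]
      apply Finset.card_le_card
      intro A hA
      simp only [Finset.mem_filter] at hA
      rw [Finset.mem_powersetCard]
      exact ⟨hFS A hA.1, hA.2⟩
    calc (∑ A ∈ F.filter (fun A => A.card = k), 1 / ((s.choose A.card : ℝ)))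
        = ∑ A ∈ F.filter (fun A => A.card = k), 1 / ((s.choose k : ℝ)) := by
          apply Finset.sum_congr rfl
          intro A hA
          rw [(Finset.mem_filter.mp hA).2]
      _ = (F.filter (fun A => A.card = k)).card / (s.choose k : ℝ) := by
          rw [Finset.sum_const, nsmul_eq_mul, mul_one_div]
      _ ≤ 1 := by
          rw [div_le_one hpos]
          exact_mod_cast hcard
  calc (∑ k ∈ Finset.range (s+1), ∑ A ∈ F.filter (fun A => A.card = k),
          1 / ((s.choose A.card : ℝ)))
      ≤ ∑ k ∈ Finset.range (s+1), 1 := Finset.sum_le_sum this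
    _ = s + 1 := by simp



lemma exists_transport {n m d : ℕ} (S : Finset (Fin n)) (hS : S.card = m)
    (F : Finset (Finset (Fin n))) (hFS : ∀ A ∈ F, A ⊆ S)
    (hF : ¬ ContainsBD n d F) :
    ∃ G : Finset (Finset (Fin m)), ¬ ContainsBD m d G ∧
      lubell m G = ∑ A ∈ F, 1 / ((m.choose A.card : ℝ)) := by
  classical
  let e : {x // x ∈ S} ≃ Fin m := S.equivFinOfCardEq hS
  let ψ : Finset (Fin n) → Finset (Fin m) := fun A => (A.subtype (· ∈ S)).image e
  let θ : Finset (Fin m) → Finset (Fin n) := fun Y => Y.image (fun y => ((e.symm y : {x // x ∈ S}) : Fin n))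
  have hθinj : Function.Injective (fun y : Fin m => ((e.symm y : {x // x ∈ S}) : Fin n)) := by
    intro y y' h
    exact e.symm.injective (Subtype.ext h)
  have hθψ : ∀ A : Finset (Fin n), A ⊆ S → θ (ψ A) = A := by
    intro A hA
    ext x
    simp only [θ, ψ, Finset.image_image, Finset.mem_image, Function.comp,
      Equiv.symm_apply_apply, Finset.mem_subtype]
    constructor
    · rintro ⟨⟨y, hyS⟩, hy, rfl⟩; exact hy
    · intro hx; exact ⟨⟨x, hA hx⟩, hx, rfl⟩
  have hψcard : ∀ A ∈ F, (ψ A).card = A.card := by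
    intro A hA
    have h1 : (ψ A).card = (A.subtype (· ∈ S)).card :=
      Finset.card_image_of_injective _ e.injective
    rw [h1, Finset.card_subtype, Finset.filter_true_of_mem (fun x hx => hFS A hA hx)]
  have hψinj : Set.InjOn ψ F := by
    intro A hA A' hA' h
    rw [← hθψ A (hFS A hA), ← hθψ A' (hFS A' hA'), h]
  refine ⟨F.image ψ, ?_, ?_⟩
  · intro hcon
    apply hF
    obtain ⟨Y₀, Y, hne, hdis0, hdis, hmem⟩ := hcon
    refine ⟨θ Y₀, fun i => θ (Y i), ?_, ?_, ?_, ?_⟩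
    · intro i; exact (hne i).image _
    · intro i; rw [Finset.disjoint_image hθinj]; exact hdis0 i
    · intro i j hij; rw [Finset.disjoint_image hθinj]; exact hdis i j hij
    · intro I
      have h1 : θ (Y₀ ∪ I.biUnion Y) = θ Y₀ ∪ I.biUnion (fun i => θ (Y i)) := by
        simp only [θ, Finset.image_union, Finset.biUnion_image]
      have h2 := hmem I
      simp only [Finset.mem_image] at h2
      obtain ⟨A, hAF, hAeq⟩ := h2
      have : θ (Y₀ ∪ I.biUnion Y) = A := by rw [← hAeq, hθψ A (hFS A hAF)]
      rw [← h1, this]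
      exact hAF
  · rw [lubell, Finset.sum_image (fun A hA A' hA' h => hψinj hA hA' h)]
    apply Finset.sum_congr rfl
    intro A hA
    rw [hψcard A hA]



lemma base_case {n : ℕ} (F : Finset (Finset (Fin n))) (hF : ¬ ContainsBD n 1 F) :
    lubell n F ≤ 1 := by
  classical
  have hanti : IsAntichain (· ⊆ ·) (F : Set (Finset (Fin n))) := by
    intro A hA B hB hne hsub
    apply hF
    have hss : A ⊂ B := ssubset_of_subset_of_ne hsub hne
    refine ⟨A, fun _ => B \ A, ?_, ?_, ?_, ?_⟩
    · intro i
      rw [Finset.sdiff_nonempty]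
      exact fun h => hne (Finset.Subset.antisymm hsub h)
    · intro i; exact Finset.disjoint_sdiff
    · intro i j hij; exact absurd (Subsingleton.elim i j) hij
    · intro I
      rcases Finset.eq_empty_or_nonempty I with rfl | hI
      · simpa using hA
      · have : I.biUnion (fun _ => B \ A) = B \ A := by
          ext x
          simp only [Finset.mem_biUnion]
          exact ⟨fun ⟨i, _, h⟩ => h, fun h => ⟨hI.choose, hI.choose_spec, h⟩⟩
        rw [this, Finset.union_sdiff_of_subset hsub]
        exact hB
  have hmap : ∀ A ∈ F, A.card ∈ Finset.range (n+1) := by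
    intro A hA
    simp only [Finset.mem_range]
    have : A.card ≤ n := by
      simpa using Finset.card_le_card (Finset.subset_univ A)
    omega
  rw [lubell, ← Finset.sum_fiberwise_of_maps_to hmap]
  have hn : Fintype.card (Fin n) = n := Fintype.card_fin n
  have := Finset.sum_card_slice_div_choose_le_one (𝕜 := ℝ) hanti
  rw [hn] at this
  refine le_trans (le_of_eq ?_) this
  apply Finset.sum_congr rfl
  intro k hk
  have : ∀ A ∈ F.filter (fun A => A.card = k), 1 / ((n.choose A.card : ℝ))
      = 1 / ((n.choose k : ℝ)) := by
    intro A hA; rw [(Finset.mem_filter.mp hA).2]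
  rw [Finset.sum_congr rfl this, Finset.sum_const, nsmul_eq_mul, mul_one_div]
  rfl



variable {n : ℕ}

def initSeg (n k : ℕ) : Finset (Fin n) := univ.filter (fun j => (j:ℕ) < k)

lemma initSeg_card {k : ℕ} (h : k ≤ n) : (initSeg n k).card = k := by
  classical
  have himg : (initSeg n k).image (Fin.val) = Finset.range k := by
    ext x
    simp only [initSeg, Finset.mem_image, Finset.mem_filter, Finset.mem_univ, true_and,
      Finset.mem_range]
    constructor
    · rintro ⟨j, hj, rfl⟩; exact hj
    · intro hx; exact ⟨⟨x, lt_of_lt_of_le hx h⟩, hx, rfl⟩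
  have := Finset.card_image_of_injective (initSeg n k) (Fin.val_injective)
  rw [himg, Finset.card_range] at this
  omega

lemma initSeg_mono {k l : ℕ} (h : k ≤ l) : initSeg n k ⊆ initSeg n l := by
  intro x hx
  simp only [initSeg, Finset.mem_filter, Finset.mem_univ, true_and] at *
  omega

def cmem (σ : Equiv.Perm (Fin n)) (S : Finset (Fin n)) : Prop :=
  (initSeg n S.card).image σ = S

instance (σ : Equiv.Perm (Fin n)) (S : Finset (Fin n)) : Decidable (cmem σ S) := by
  unfold cmem; infer_instance

lemma cmem_total {σ : Equiv.Perm (Fin n)} {A B : Finset (Fin n)}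
    (hA : cmem σ A) (hB : cmem σ B) : A ⊆ B ∨ B ⊆ A := by
  rcases le_total A.card B.card with h | h
  · left; rw [← hA, ← hB]; exact Finset.image_subset_image (initSeg_mono h)
  · right; rw [← hA, ← hB]; exact Finset.image_subset_image (initSeg_mono h)

lemma card_cmem_pair {A B : Finset (Fin n)} (hAB : A ⊆ B) :
    ((univ : Finset (Equiv.Perm (Fin n))).filter
        (fun σ => cmem σ A ∧ cmem σ B)).card
      = Nat.factorial A.card * (Nat.factorial (B.card - A.card) * Nat.factorial (n - B.card)) := by
  classical
  set a := A.card with ha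
  set b := B.card with hb
  have hab : a ≤ b := Finset.card_le_card hAB
  have hbn : b ≤ n := by simpa using Finset.card_le_card (Finset.subset_univ B)
  set g : Fin n → Fin 3 := fun x => if x ∈ A then 0 else if x ∈ B then 1 else 2 with hg
  set f : Fin n → Fin 3 := fun x => if (x:ℕ) < a then 0 else if (x:ℕ) < b then 1 else 2 with hf
  -- fiber characterizations
  have hg0 : ∀ x, g x = 0 ↔ x ∈ A := by
    intro x; by_cases h1 : x ∈ A
    · simp [hg, h1]
    · by_cases h2 : x ∈ B <;> simp [hg, h1, h2]
  have hg1 : ∀ x, g x = 1 ↔ (x ∈ B ∧ x ∉ A) := by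
    intro x; by_cases h1 : x ∈ A
    · simp [hg, h1, hAB h1]
    · by_cases h2 : x ∈ B <;> simp [hg, h1, h2]
  have hg2 : ∀ x, g x = 2 ↔ x ∉ B := by
    intro x; by_cases h1 : x ∈ A
    · simp [hg, h1, hAB h1]
    · by_cases h2 : x ∈ B <;> simp [hg, h1, h2]
  have hf0 : ∀ x : Fin n, f x = 0 ↔ (x:ℕ) < a := by
    intro x; by_cases h1 : (x:ℕ) < a
    · simp [hf, h1]
    · by_cases h2 : (x:ℕ) < b <;> simp [hf, h1, h2]
  have hf1 : ∀ x : Fin n, f x = 1 ↔ ((x:ℕ) < b ∧ ¬ (x:ℕ) < a) := by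
    intro x; by_cases h1 : (x:ℕ) < a
    · simp only [hf, if_pos h1]
      constructor
      · intro h; exact absurd h (by decide)
      · intro h; omega
    · by_cases h2 : (x:ℕ) < b <;> simp [hf, h1, h2]
  have hf2 : ∀ x : Fin n, f x = 2 ↔ ¬ (x:ℕ) < b := by
    intro x; by_cases h1 : (x:ℕ) < a
    · constructor
      · intro h; exfalso; simp [hf, h1] at h
      · intro h; omega
    · by_cases h2 : (x:ℕ) < b <;> simp [hf, h1, h2]
  -- fiber cardinalities
  have cg0 : Fintype.card {x // g x = 0} = a := by
    rw [Fintype.card_subtype]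
    have : univ.filter (fun x => g x = 0) = A := by
      ext x; simp [hg0 x]
    rw [this]
  have cg1 : Fintype.card {x // g x = 1} = b - a := by
    rw [Fintype.card_subtype]
    have : univ.filter (fun x => g x = 1) = B \ A := by
      ext x
      simp only [Finset.mem_filter, Finset.mem_univ, true_and, hg1 x, Finset.mem_sdiff]
    rw [this, Finset.card_sdiff_of_subset hAB]
  have cg2 : Fintype.card {x // g x = 2} = n - b := by
    rw [Fintype.card_subtype]
    have : univ.filter (fun x => g x = 2) = Bᶜ := by
      ext x; simp [hg2 x]
    rw [this, Finset.card_compl, Fintype.card_fin]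
  have cf0 : Fintype.card {x // f x = 0} = a := by
    rw [Fintype.card_subtype]
    have : univ.filter (fun x => f x = 0) = initSeg n a := by
      ext x; simp [hf0 x, initSeg]
    rw [this, initSeg_card (le_trans hab hbn)]
  have cf1 : Fintype.card {x // f x = 1} = b - a := by
    rw [Fintype.card_subtype]
    have : univ.filter (fun x => f x = 1) = initSeg n b \ initSeg n a := by
      ext x
      simp only [Finset.mem_filter, Finset.mem_univ, true_and, hf1 x, Finset.mem_sdiff,
        initSeg]
    rw [this, Finset.card_sdiff_of_subset (initSeg_mono hab), initSeg_card hbn,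
      initSeg_card (le_trans hab hbn)]
  have cf2 : Fintype.card {x // f x = 2} = n - b := by
    rw [Fintype.card_subtype]
    have : univ.filter (fun x => f x = 2) = (initSeg n b)ᶜ := by
      ext x; simp [hf2 x, initSeg]
    rw [this, Finset.card_compl, Fintype.card_fin, initSeg_card hbn]
  have hfib : ∀ k : Fin 3, Fintype.card {x // f x = k} = Fintype.card {x // g x = k} := by
    intro k
    fin_cases k
    · exact cf0.trans cg0.symm
    · exact cf1.trans cg1.symm
    · exact cf2.trans cg2.symm
  -- a permutation sending f-fibers to g-fibers
  let eFib : ∀ k : Fin 3, {x // f x = k} ≃ {x // g x = k} :=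
    fun k => Fintype.equivOfCardEq (hfib k)
  let σ₀ : Equiv.Perm (Fin n) :=
    ((Equiv.sigmaFiberEquiv f).symm.trans (Equiv.sigmaCongrRight eFib)).trans
      (Equiv.sigmaFiberEquiv g)
  have hσ₀ : ∀ x, g (σ₀ x) = f x := by
    intro x
    have : σ₀ x = (eFib (f x) ⟨x, rfl⟩).val := rfl
    rw [this]
    exact (eFib (f x) ⟨x, rfl⟩).2
  -- the coset bijection
  let cosetEquiv : {τ : Equiv.Perm (Fin n) // g ∘ τ = g} ≃
      {ρ : Equiv.Perm (Fin n) // g ∘ ρ = f} :=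
    { toFun := fun τ => ⟨σ₀.trans τ.1, by
        funext x
        have := congrFun τ.2 (σ₀ x)
        simp only [Function.comp] at this ⊢
        simp [Equiv.trans_apply, this, hσ₀ x]⟩
      invFun := fun ρ => ⟨σ₀.symm.trans ρ.1, by
        funext x
        have := congrFun ρ.2 (σ₀.symm x)
        simp only [Function.comp] at this ⊢
        rw [Equiv.trans_apply, this, ← hσ₀ (σ₀.symm x), Equiv.apply_symm_apply]⟩
      left_inv := fun τ => by
        apply Subtype.ext
        ext x
        simp [Equiv.trans_apply]
      right_inv := fun ρ => by
        apply Subtype.ext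
        ext x
        simp [Equiv.trans_apply] }
  -- counting
  have hcount : Fintype.card {ρ : Equiv.Perm (Fin n) // g ∘ ρ = f}
      = Nat.factorial a * (Nat.factorial (b - a) * Nat.factorial (n - b)) := by
    rw [← Fintype.card_congr cosetEquiv, DomMulAct.stabilizer_card g]
    rw [Fin.prod_univ_three]
    rw [cg0, cg1, cg2, mul_assoc]
  -- identify the filter with the subtype
  have hiff : ∀ σ : Equiv.Perm (Fin n), (cmem σ A ∧ cmem σ B) ↔ g ∘ σ = f := by
    intro σ
    constructor
    · rintro ⟨hA, hB⟩
      funext x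
      by_cases h1 : (x:ℕ) < a
      · have hx : x ∈ initSeg n a := by simp [initSeg, h1]
        have : σ x ∈ A := by rw [← hA]; exact Finset.mem_image_of_mem _ hx
        simp only [Function.comp]
        rw [(hg0 _).mpr this, (hf0 x).mpr h1]
      · by_cases h2 : (x:ℕ) < b
        · have hx : x ∈ initSeg n b := by simp [initSeg, h2]
          have hmem : σ x ∈ B := by rw [← hB]; exact Finset.mem_image_of_mem _ hx
          have hnot : σ x ∉ A := by
            intro hcon
            rw [← hA] at hcon
            obtain ⟨y, hy, hxy⟩ := Finset.mem_image.mp hcon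
            have : y = x := σ.injective hxy
            subst this
            simp [initSeg] at hy
            omega
          simp only [Function.comp]
          rw [(hg1 _).mpr ⟨hmem, hnot⟩, (hf1 x).mpr ⟨h2, h1⟩]
        · have hnot : σ x ∉ B := by
            intro hcon
            rw [← hB] at hcon
            obtain ⟨y, hy, hxy⟩ := Finset.mem_image.mp hcon
            have : y = x := σ.injective hxy
            subst this
            simp [initSeg] at hy
            omega
          simp only [Function.comp]
          rw [(hg2 _).mpr hnot, (hf2 x).mpr h2]
    · intro h
      have hsub : ∀ (k : ℕ) (C : Finset (Fin n)), k ≤ n → C.card = k →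
          (∀ x : Fin n, (x:ℕ) < k → σ x ∈ C) → cmem σ C := by
        intro k C hkn hCk hin
        subst hCk
        have hsub1 : (initSeg n C.card).image σ ⊆ C := by
          intro y hy
          obtain ⟨x, hx, rfl⟩ := Finset.mem_image.mp hy
          simp [initSeg] at hx
          exact hin x hx
        have hceq : ((initSeg n C.card).image σ).card = C.card := by
          rw [Finset.card_image_of_injective _ σ.injective, initSeg_card hkn]
        show (initSeg n C.card).image σ = C
        exact (Finset.eq_of_subset_of_card_le hsub1 (le_of_eq hceq.symm))
      constructor
      · apply hsub a A (le_trans hab hbn) ha.symm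
        intro x hx
        have := congrFun h x
        simp only [Function.comp] at this
        rw [(hf0 x).mpr hx] at this
        exact (hg0 _).mp this
      · apply hsub b B hbn hb.symm
        intro x hx
        have := congrFun h x
        simp only [Function.comp] at this
        by_cases h1 : (x:ℕ) < a
        · rw [(hf0 x).mpr h1] at this
          exact hAB ((hg0 _).mp this)
        · rw [(hf1 x).mpr ⟨hx, h1⟩] at this
          exact ((hg1 _).mp this).1
  calc ((univ : Finset (Equiv.Perm (Fin n))).filter
        (fun σ => cmem σ A ∧ cmem σ B)).card
      = Fintype.card {σ : Equiv.Perm (Fin n) // cmem σ A ∧ cmem σ B} :=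
        (Fintype.card_subtype _).symm
    _ = Fintype.card {ρ : Equiv.Perm (Fin n) // g ∘ ρ = f} :=
        Fintype.card_congr (Equiv.subtypeEquivRight hiff)
    _ = _ := hcount
section P6
variable {m : ℕ}

lemma FZ_free {d : ℕ} (F : Finset (Finset (Fin m))) (Z : Finset (Fin m))
    (hZ : Z.Nonempty) (hF : ¬ ContainsBD m (d+1) F) :
    ¬ ContainsBD m d (F.filter (fun A => Disjoint A Z ∧ A ∪ Z ∈ F)) := by
  intro hcon
  apply hF
  obtain ⟨X₀, X, hne, hd0, hdp, hmem⟩ := hcon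
  have hU : ∀ I : Finset (Fin d), (X₀ ∪ I.biUnion X) ∈ F ∧
      Disjoint (X₀ ∪ I.biUnion X) Z ∧ (X₀ ∪ I.biUnion X) ∪ Z ∈ F := by
    intro I
    have := hmem I
    rw [Finset.mem_filter] at this
    exact ⟨this.1, this.2.1, this.2.2⟩
  refine ⟨X₀, Fin.snoc X Z, ?_, ?_, ?_, ?_⟩
  · intro i
    rcases Fin.eq_castSucc_or_eq_last i with ⟨j, rfl⟩ | rfl
    · rw [Fin.snoc_castSucc]; exact hne j
    · rw [Fin.snoc_last]; exact hZ
  · intro i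
    rcases Fin.eq_castSucc_or_eq_last i with ⟨j, rfl⟩ | rfl
    · rw [Fin.snoc_castSucc]; exact hd0 j
    · rw [Fin.snoc_last]
      have := (hU ∅).2.1
      simpa using this
  · intro i j hij
    rcases Fin.eq_castSucc_or_eq_last i with ⟨i', rfl⟩ | rfl <;>
      rcases Fin.eq_castSucc_or_eq_last j with ⟨j', rfl⟩ | rfl
    · rw [Fin.snoc_castSucc, Fin.snoc_castSucc]
      exact hdp i' j' (fun h => hij (by rw [h]))
    · rw [Fin.snoc_castSucc, Fin.snoc_last]
      have := (hU {i'}).2.1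
      rw [Finset.singleton_biUnion] at this
      exact (Finset.disjoint_union_left.mp this).2
    · rw [Fin.snoc_castSucc, Fin.snoc_last]
      have := (hU {j'}).2.1
      rw [Finset.singleton_biUnion] at this
      exact ((Finset.disjoint_union_left.mp this).2).symm
    · exact absurd rfl hij
  · intro I'
    classical
    set I₀ : Finset (Fin d) := I'.preimage Fin.castSucc
      ((Fin.castSucc_injective d).injOn) with hI₀
    have hsplit : X₀ ∪ I'.biUnion (Fin.snoc X Z)
        = (X₀ ∪ I₀.biUnion X) ∪ (if Fin.last d ∈ I' then Z else ∅) := by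
      ext x
      simp only [Finset.mem_union, Finset.mem_biUnion, hI₀, Finset.mem_preimage]
      constructor
      · rintro (hx | ⟨i, hiI, hx⟩)
        · exact Or.inl (Or.inl hx)
        · rcases Fin.eq_castSucc_or_eq_last i with ⟨j, rfl⟩ | rfl
          · rw [Fin.snoc_castSucc] at hx
            exact Or.inl (Or.inr ⟨j, hiI, hx⟩)
          · rw [Fin.snoc_last] at hx
            right
            rw [if_pos hiI]
            exact hx
      · rintro ((hx | ⟨j, hjI, hx⟩) | hx)
        · exact Or.inl hx
        · exact Or.inr ⟨Fin.castSucc j, hjI, by rwa [Fin.snoc_castSucc]⟩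
        · by_cases hlast : Fin.last d ∈ I'
          · rw [if_pos hlast] at hx
            exact Or.inr ⟨Fin.last d, hlast, by rwa [Fin.snoc_last]⟩
          · rw [if_neg hlast] at hx
            exact absurd hx (Finset.notMem_empty x)
    rw [hsplit]
    by_cases hlast : Fin.last d ∈ I'
    · rw [if_pos hlast]
      exact (hU I₀).2.2
    · rw [if_neg hlast, Finset.union_empty]
      exact (hU I₀).1

lemma subset_bound {n m d : ℕ}
    (IH : ∀ G : Finset (Finset (Fin m)), ¬ ContainsBD m d G → lubell m G ≤ alpha m d)
    (S : Finset (Fin n)) (hS : S.card = m) (F : Finset (Finset (Fin n)))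
    (hFS : ∀ A ∈ F, A ⊆ S) (hF : ¬ ContainsBD n d F) :
    ∑ A ∈ F, 1 / ((m.choose A.card : ℝ)) ≤ alpha m d := by
  obtain ⟨G, hG, hGl⟩ := exists_transport S hS F hFS hF
  rw [← hGl]
  exact IH G hG

end P6
section P7
variable {m : ℕ}

lemma count_single (A : Finset (Fin m)) :
    ((univ : Finset (Equiv.Perm (Fin m))).filter (fun σ => cmem σ A)).card
      = Nat.factorial A.card * Nat.factorial (m - A.card) := by
  have h := card_cmem_pair (Finset.Subset.refl A)
  simp only [and_self, Nat.sub_self, Nat.factorial_zero, one_mul] at h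
  exact h

lemma card_A_le (A : Finset (Fin m)) : A.card ≤ m := by
  have := Finset.card_le_univ A
  simpa using this

lemma fact_term (A : Finset (Fin m)) :
    (Nat.factorial A.card * Nat.factorial (m - A.card) : ℝ)
      = (Nat.factorial m : ℝ) * (1 / (m.choose A.card : ℝ)) := by
  have hca := card_A_le A
  have h := Nat.choose_mul_factorial_mul_factorial hca
  have hpos : 0 < (m.choose A.card : ℝ) := by exact_mod_cast Nat.choose_pos hca
  rw [mul_one_div, eq_div_iff (ne_of_gt hpos)]
  exact_mod_cast (by rw [← h]; ring)

lemma sum_f_eq (F : Finset (Finset (Fin m))) :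
    ∑ σ ∈ (univ : Finset (Equiv.Perm (Fin m))), ((F.filter (fun A => cmem σ A)).card : ℝ)
      = (Nat.factorial m : ℝ) * lubell m F := by
  have h0 : ∑ σ ∈ (univ : Finset (Equiv.Perm (Fin m))), (F.filter (fun A => cmem σ A)).card
      = ∑ A ∈ F, ((univ : Finset (Equiv.Perm (Fin m))).filter (fun σ => cmem σ A)).card := by
    simp only [Finset.card_filter]
    exact Finset.sum_comm
  rw [← Nat.cast_sum, h0, Nat.cast_sum]
  rw [Finset.sum_congr rfl (fun A (_ : A ∈ F) =>
    congrArg (Nat.cast : ℕ → ℝ) (count_single A))]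
  push_cast
  rw [Finset.sum_congr rfl (fun A (_ : A ∈ F) => by
    have := fact_term (m := m) A
    push_cast at this ⊢
    exact this), lubell, Finset.mul_sum]

end P7
section P8
variable {m : ℕ}

def NpF {m : ℕ} (p : Finset (Fin m) × Finset (Fin m)) : ℕ :=
  ((univ : Finset (Equiv.Perm (Fin m))).filter (fun σ => cmem σ p.1 ∧ cmem σ p.2)).card

lemma sum_ff_eq (F : Finset (Finset (Fin m))) :
    ∑ σ ∈ (univ : Finset (Equiv.Perm (Fin m))),
        (F.filter (fun A => cmem σ A)).card * (F.filter (fun A => cmem σ A)).card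
      = (∑ σ ∈ (univ : Finset (Equiv.Perm (Fin m))), (F.filter (fun A => cmem σ A)).card)
        + ∑ p ∈ F.offDiag, NpF p := by
  classical
  have hpair_eq : ∀ σ : Equiv.Perm (Fin m),
      (F.filter (fun A => cmem σ A)).offDiag
        = F.offDiag.filter (fun p => cmem σ p.1 ∧ cmem σ p.2) := by
    intro σ
    ext p
    simp only [Finset.mem_offDiag, Finset.mem_filter]
    tauto
  have hsq : ∀ σ : Equiv.Perm (Fin m),
      (F.filter (fun A => cmem σ A)).card * (F.filter (fun A => cmem σ A)).card
        = (F.filter (fun A => cmem σ A)).card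
          + (F.offDiag.filter (fun p => cmem σ p.1 ∧ cmem σ p.2)).card := by
    intro σ
    rw [← hpair_eq σ, Finset.offDiag_card]
    have h2 : (F.filter (fun A => cmem σ A)).card
        ≤ (F.filter (fun A => cmem σ A)).card * (F.filter (fun A => cmem σ A)).card := by
      nlinarith [Nat.zero_le ((F.filter (fun A => cmem σ A)).card)]
    omega
  rw [Finset.sum_congr rfl (fun σ _ => hsq σ), Finset.sum_add_distrib]
  congr 1
  have : ∀ σ : Equiv.Perm (Fin m),
      (F.offDiag.filter (fun p => cmem σ p.1 ∧ cmem σ p.2)).card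
        = ∑ p ∈ F.offDiag, if (cmem σ p.1 ∧ cmem σ p.2) then 1 else 0 :=
    fun σ => Finset.card_filter _ _
  rw [Finset.sum_congr rfl (fun σ _ => this σ), Finset.sum_comm]
  apply Finset.sum_congr rfl
  intro p _
  rw [NpF, Finset.card_filter]

lemma sum_offDiag_eq (F : Finset (Finset (Fin m))) :
    ∑ p ∈ F.offDiag, NpF p
      = 2 * ∑ p ∈ F.offDiag.filter (fun p => p.1 ⊂ p.2), NpF p := by
  classical
  set L := F.offDiag.filter (fun p => p.1 ⊂ p.2) with hL
  set R := F.offDiag.filter (fun p => p.2 ⊂ p.1) with hR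
  have hdisj : Disjoint L R := by
    rw [Finset.disjoint_left]
    intro p hp hp'
    rw [hL, Finset.mem_filter] at hp
    rw [hR, Finset.mem_filter] at hp'
    exact absurd rfl (ne_of_ssubset (hp.2.trans hp'.2))
  have hsub : L ∪ R ⊆ F.offDiag := by
    apply Finset.union_subset <;> exact Finset.filter_subset _ _
  have hvanish : ∀ p ∈ F.offDiag, p ∉ L ∪ R → NpF p = 0 := by
    intro p hp hpn
    rw [NpF, Finset.card_eq_zero, Finset.filter_eq_empty_iff]
    rintro σ - ⟨h1, h2⟩
    obtain ⟨hp1, hp2, hpne⟩ := Finset.mem_offDiag.mp hp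
    rcases cmem_total h1 h2 with hss | hss
    · exact hpn (Finset.mem_union_left _ (Finset.mem_filter.mpr
        ⟨hp, ssubset_of_subset_of_ne hss hpne⟩))
    · exact hpn (Finset.mem_union_right _ (Finset.mem_filter.mpr
        ⟨hp, ssubset_of_subset_of_ne hss hpne.symm⟩))
  have h1 : ∑ p ∈ F.offDiag, NpF p = ∑ p ∈ L ∪ R, NpF p :=
    (Finset.sum_subset hsub (fun p hp hpn => hvanish p hp hpn)).symm
  have h2 : ∑ p ∈ L ∪ R, NpF p = ∑ p ∈ L, NpF p + ∑ p ∈ R, NpF p :=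
    Finset.sum_union hdisj
  have h3 : ∑ p ∈ R, NpF p = ∑ p ∈ L, NpF p := by
    apply Finset.sum_nbij' (fun p => Prod.swap p) (fun p => Prod.swap p)
    · intro p hp
      rw [hR, Finset.mem_filter] at hp
      rw [hL, Finset.mem_filter]
      obtain ⟨hp1, hp2, hpne⟩ := Finset.mem_offDiag.mp hp.1
      exact ⟨Finset.mem_offDiag.mpr ⟨hp2, hp1, hpne.symm⟩, hp.2⟩
    · intro p hp
      rw [hL, Finset.mem_filter] at hp
      rw [hR, Finset.mem_filter]
      obtain ⟨hp1, hp2, hpne⟩ := Finset.mem_offDiag.mp hp.1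
      exact ⟨Finset.mem_offDiag.mpr ⟨hp2, hp1, hpne.symm⟩, hp.2⟩
    · intro p _; exact Prod.swap_swap p
    · intro p _; exact Prod.swap_swap p
    · intro p _
      rw [NpF, NpF]
      congr 1
      apply Finset.filter_congr
      intro σ _
      exact and_comm
  rw [h1, h2, h3]
  omega

end P8
section P9
variable {m : ℕ}

lemma regroup_L (F : Finset (Finset (Fin m))) :
    ∑ p ∈ F.offDiag.filter (fun p => p.1 ⊂ p.2), (NpF p : ℝ)
      = ∑ Z ∈ (univ : Finset (Finset (Fin m))).filter (fun Z => Z.Nonempty),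
          ∑ A ∈ F.filter (fun A => Disjoint A Z ∧ A ∪ Z ∈ F),
            (Nat.factorial A.card *
              (Nat.factorial Z.card * Nat.factorial (m - (A.card + Z.card))) : ℝ) := by
  classical
  set P : Finset (Finset (Fin m) × Finset (Fin m)) :=
    ((univ : Finset (Finset (Fin m))) ×ˢ (univ : Finset (Finset (Fin m)))).filter
      (fun q => q.1.Nonempty ∧ (q.2 ∈ F ∧ Disjoint q.2 q.1 ∧ q.2 ∪ q.1 ∈ F)) with hP
  have hmemP : ∀ q : Finset (Fin m) × Finset (Fin m),
      q ∈ P ↔ q.1 ∈ (univ : Finset (Finset (Fin m))).filter (fun Z => Z.Nonempty)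
        ∧ q.2 ∈ F.filter (fun A => Disjoint A q.1 ∧ A ∪ q.1 ∈ F) := by
    intro q
    simp only [hP, Finset.mem_filter, Finset.mem_product, Finset.mem_univ, true_and,
      and_assoc]
  rw [← Finset.sum_finset_product P _ _ hmemP
    (f := fun q => (Nat.factorial q.2.card *
      (Nat.factorial q.1.card * Nat.factorial (m - (q.2.card + q.1.card))) : ℝ))]
  apply Finset.sum_nbij' (i := fun p => (p.2 \ p.1, p.1)) (j := fun q => (q.2, q.2 ∪ q.1))
  · intro p hp
    rw [Finset.mem_filter] at hp
    obtain ⟨hpo, hss⟩ := hp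
    obtain ⟨hp1, hp2, hpne⟩ := Finset.mem_offDiag.mp hpo
    rw [hmemP]
    constructor
    · rw [Finset.mem_filter]
      refine ⟨Finset.mem_univ _, Finset.sdiff_nonempty.mpr ?_⟩
      intro hc
      exact hpne (Finset.Subset.antisymm hss.subset hc)
    · rw [Finset.mem_filter]
      refine ⟨hp1, Finset.disjoint_sdiff, ?_⟩
      rw [Finset.union_sdiff_of_subset hss.subset]
      exact hp2
  · intro q hq
    rw [hmemP, Finset.mem_filter, Finset.mem_filter] at hq
    obtain ⟨⟨-, hZne⟩, hAF, hdisj, hAZ⟩ := hq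
    rw [Finset.mem_filter]
    constructor
    · rw [Finset.mem_offDiag]
      refine ⟨hAF, hAZ, ?_⟩
      intro hc
      have hc2 : q.2 = q.2 ∪ q.1 := hc
      obtain ⟨z, hz⟩ := hZne
      have : z ∈ q.2 := by rw [hc2]; exact Finset.mem_union_right _ hz
      exact (Finset.disjoint_left.mp hdisj this) hz
    · refine Finset.ssubset_iff_subset_ne.mpr ⟨Finset.subset_union_left, ?_⟩
      intro hc
      have hc2 : q.2 = q.2 ∪ q.1 := hc
      obtain ⟨z, hz⟩ := hZne
      have : z ∈ q.2 := by rw [hc2]; exact Finset.mem_union_right _ hz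
      exact (Finset.disjoint_left.mp hdisj this) hz
  · intro p hp
    rw [Finset.mem_filter] at hp
    have := hp.2.subset
    ext <;> simp [Finset.union_sdiff_of_subset this]
  · intro q hq
    rw [hmemP, Finset.mem_filter, Finset.mem_filter] at hq
    obtain ⟨⟨-, hZne⟩, hAF, hdisj, hAZ⟩ := hq
    have : (q.2 ∪ q.1) \ q.2 = q.1 := Finset.union_sdiff_cancel_left hdisj
    ext <;> simp [this]
  · intro p hp
    rw [Finset.mem_filter] at hp
    obtain ⟨hpo, hss⟩ := hp
    have hsub := hss.subset
    have hcard : (p.2 \ p.1).card = p.2.card - p.1.card := Finset.card_sdiff_of_subset hsub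
    have hle : p.1.card ≤ p.2.card := Finset.card_le_card hsub
    have := card_cmem_pair hsub
    rw [NpF]
    rw [this, hcard]
    have : p.1.card + (p.2.card - p.1.card) = p.2.card := by omega
    rw [this]
    push_cast
    ring

lemma term_identity {Z A : Finset (Fin m)} (hdisj : Disjoint A Z) :
    (Nat.factorial A.card * (Nat.factorial Z.card * Nat.factorial (m - (A.card + Z.card))) : ℝ)
      = (Nat.factorial m : ℝ) *
          ((1 / (m.choose Z.card : ℝ)) * (1 / ((m - Z.card).choose A.card : ℝ))) := by
  have hle : A.card + Z.card ≤ m := by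
    rw [← Finset.card_union_of_disjoint hdisj]
    exact card_A_le _
  have hz : Z.card ≤ m := by omega
  have ha : A.card ≤ m - Z.card := by omega
  have f1 := Nat.choose_mul_factorial_mul_factorial hz
  have f2 := Nat.choose_mul_factorial_mul_factorial ha
  have hsubeq : m - Z.card - A.card = m - (A.card + Z.card) := by omega
  rw [hsubeq] at f2
  have hX : 0 < (m.choose Z.card : ℝ) := by exact_mod_cast Nat.choose_pos hz
  have hY : 0 < ((m - Z.card).choose A.card : ℝ) := by exact_mod_cast Nat.choose_pos ha
  have key : (Nat.factorial A.card * (Nat.factorial Z.card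
        * Nat.factorial (m - (A.card + Z.card)))
        * (m.choose Z.card * (m - Z.card).choose A.card) : ℕ) = Nat.factorial m := by
    rw [← f1, ← f2]; ring
  have keyR : (Nat.factorial A.card * (Nat.factorial Z.card
        * Nat.factorial (m - (A.card + Z.card))) : ℝ)
        * ((m.choose Z.card : ℝ) * ((m - Z.card).choose A.card : ℝ))
        = (Nat.factorial m : ℝ) := by exact_mod_cast key
  field_simp
  linarith [keyR]

lemma NE_sum : ∑ Z ∈ (univ : Finset (Finset (Fin m))).filter (fun Z => Z.Nonempty),
    (1 / (m.choose Z.card : ℝ)) = m := by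
  classical
  have htot : ∑ Z ∈ (univ : Finset (Finset (Fin m))), (1 / (m.choose Z.card : ℝ))
      = m + 1 := by
    have hmap : ∀ Z ∈ (univ : Finset (Finset (Fin m))), Z.card ∈ Finset.range (m+1) := by
      intro Z _
      rw [Finset.mem_range]
      exact Nat.lt_succ_of_le (card_A_le Z)
    rw [← Finset.sum_fiberwise_of_maps_to hmap]
    have hinner : ∀ k ∈ Finset.range (m+1),
        ∑ Z ∈ (univ : Finset (Finset (Fin m))).filter (fun Z => Z.card = k),
          (1 / (m.choose Z.card : ℝ)) = 1 := by
      intro k hk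
      have hkm : k ≤ m := Nat.lt_succ_iff.mp (Finset.mem_range.mp hk)
      have hfil : (univ : Finset (Finset (Fin m))).filter (fun Z => Z.card = k)
          = Finset.powersetCard k (univ : Finset (Fin m)) := by
        ext Z
        simp [Finset.mem_powersetCard, Finset.subset_univ]
      have hcnt : ((univ : Finset (Finset (Fin m))).filter (fun Z => Z.card = k)).card
          = m.choose k := by
        rw [hfil, Finset.card_powersetCard, Finset.card_univ, Fintype.card_fin]
      have hpos : 0 < (m.choose k : ℝ) := by exact_mod_cast Nat.choose_pos hkm
      have : ∀ Z ∈ (univ : Finset (Finset (Fin m))).filter (fun Z => Z.card = k),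
          (1 / (m.choose Z.card : ℝ)) = 1 / (m.choose k : ℝ) := by
        intro Z hZ
        rw [(Finset.mem_filter.mp hZ).2]
      rw [Finset.sum_congr rfl this, Finset.sum_const, nsmul_eq_mul, hcnt, mul_one_div,
        div_self (ne_of_gt hpos)]
    rw [Finset.sum_congr rfl hinner, Finset.sum_const, Finset.card_range, nsmul_eq_mul,
      mul_one]
    push_cast
    ring
  have hsplit := Finset.sum_filter_add_sum_filter_not
    (univ : Finset (Finset (Fin m))) (fun Z => Z.Nonempty)
    (fun Z => (1 / (m.choose Z.card : ℝ)))
  have hempty : (univ : Finset (Finset (Fin m))).filter (fun Z => ¬ Z.Nonempty) = {∅} := by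
    ext Z
    simp [Finset.not_nonempty_iff_eq_empty]
  rw [hempty] at hsplit
  simp only [Finset.sum_singleton, Finset.card_empty, Nat.choose_zero_right,
    Nat.cast_one, div_one] at hsplit
  rw [htot] at hsplit
  linarith

end P9
section P10
variable {m : ℕ}

lemma hrel_bound {d : ℕ} (hd : 1 ≤ d) (hdm : d + 1 ≤ m)
    (IH : ∀ m', d ≤ m' → ∀ G : Finset (Finset (Fin m')),
      ¬ ContainsBD m' d G → lubell m' G ≤ alpha m' d)
    (F : Finset (Finset (Fin m))) (hF : ¬ ContainsBD m (d+1) F)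
    (Z : Finset (Fin m)) (hZne : Z.Nonempty) :
    ∑ A ∈ F.filter (fun A => Disjoint A Z ∧ A ∪ Z ∈ F),
      (1 / ((m - Z.card).choose A.card : ℝ)) ≤ alpha m d := by
  classical
  set FZ := F.filter (fun A => Disjoint A Z ∧ A ∪ Z ∈ F) with hFZ
  have hFZsub : ∀ A ∈ FZ, A ⊆ Zᶜ := by
    intro A hA
    rw [hFZ, Finset.mem_filter] at hA
    intro x hx
    rw [Finset.mem_compl]
    exact Finset.disjoint_left.mp hA.2.1 hx
  have hScard : (Zᶜ : Finset (Fin m)).card = m - Z.card := by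
    rw [Finset.card_compl, Fintype.card_fin]
  have hfree : ¬ ContainsBD m d FZ := FZ_free F Z hZne hF
  by_cases hcase : d ≤ m - Z.card
  · have hb := subset_bound (fun G hG => IH (m - Z.card) hcase G hG)
      Zᶜ hScard FZ hFZsub hfree
    exact le_trans hb (alpha_mono_n (Nat.sub_le m Z.card) d)
  · have htriv := rlub_trivial Zᶜ FZ hFZsub
    rw [hScard] at htriv
    have h1 : ((m - Z.card : ℕ) : ℝ) + 1 ≤ (d : ℝ) := by
      have : (m - Z.card) + 1 ≤ d := by omega
      exact_mod_cast this
    have h2 : (d : ℝ) ≤ alpha m d := alpha_ge_d hd (by omega)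
    linarith

lemma cube_bound : ∀ d, 1 ≤ d → ∀ m, d ≤ m → ∀ F : Finset (Finset (Fin m)),
    ¬ ContainsBD m d F → lubell m F ≤ alpha m d := by
  intro d
  induction d with
  | zero => omega
  | succ d IH =>
    intro _ m hdm F hF
    rcases Nat.eq_zero_or_pos d with rfl | hd
    · have := base_case F hF
      simpa [alpha] using this
    -- main step
    classical
    set f : Equiv.Perm (Fin m) → ℕ := fun σ => (F.filter (fun A => cmem σ A)).card with hf
    have hNfac : ((univ : Finset (Equiv.Perm (Fin m)))).card = Nat.factorial m := by
      rw [Finset.card_univ, Fintype.card_perm, Fintype.card_fin]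
    have hfacpos : (0:ℝ) < (Nat.factorial m : ℝ) := by
      exact_mod_cast Nat.factorial_pos m
    set h := lubell m F with hh
    set lam := alpha m d with hlam
    -- first moment
    have hsum1 : ∑ σ ∈ (univ : Finset (Equiv.Perm (Fin m))), (f σ : ℝ)
        = (Nat.factorial m : ℝ) * h := sum_f_eq F
    -- second moment
    have hsum2 : ∑ σ ∈ (univ : Finset (Equiv.Perm (Fin m))), (f σ : ℝ) * (f σ : ℝ)
        ≤ (Nat.factorial m : ℝ) * h
          + 2 * ((Nat.factorial m : ℝ) * (m * lam)) := by
      have hN : ∑ σ ∈ (univ : Finset (Equiv.Perm (Fin m))), f σ * f σ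
          = (∑ σ ∈ (univ : Finset (Equiv.Perm (Fin m))), f σ)
            + 2 * ∑ p ∈ F.offDiag.filter (fun p => p.1 ⊂ p.2), NpF p := by
        rw [sum_ff_eq F, sum_offDiag_eq F]
      have hNR : ∑ σ ∈ (univ : Finset (Equiv.Perm (Fin m))), (f σ : ℝ) * (f σ : ℝ)
          = (∑ σ ∈ (univ : Finset (Equiv.Perm (Fin m))), (f σ : ℝ))
            + 2 * ∑ p ∈ F.offDiag.filter (fun p => p.1 ⊂ p.2), (NpF p : ℝ) := by
        exact_mod_cast congrArg (Nat.cast : ℕ → ℝ) hN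
      rw [hNR, hsum1]
      have hL : ∑ p ∈ F.offDiag.filter (fun p => p.1 ⊂ p.2), (NpF p : ℝ)
          ≤ (Nat.factorial m : ℝ) * (m * lam) := by
        rw [regroup_L F]
        have hterm : ∀ Z ∈ (univ : Finset (Finset (Fin m))).filter (fun Z => Z.Nonempty),
            ∑ A ∈ F.filter (fun A => Disjoint A Z ∧ A ∪ Z ∈ F),
              (Nat.factorial A.card *
                (Nat.factorial Z.card * Nat.factorial (m - (A.card + Z.card))) : ℝ)
            ≤ (Nat.factorial m : ℝ) * ((1 / (m.choose Z.card : ℝ)) * lam) := by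
          intro Z hZ
          have hZne : Z.Nonempty := (Finset.mem_filter.mp hZ).2
          have hrw : ∀ A ∈ F.filter (fun A => Disjoint A Z ∧ A ∪ Z ∈ F),
              (Nat.factorial A.card *
                (Nat.factorial Z.card * Nat.factorial (m - (A.card + Z.card))) : ℝ)
              = (Nat.factorial m : ℝ) * ((1 / (m.choose Z.card : ℝ))
                  * (1 / ((m - Z.card).choose A.card : ℝ))) := by
            intro A hA
            exact term_identity (Finset.mem_filter.mp hA).2.1
          rw [Finset.sum_congr rfl hrw]
          have hfac : ∀ A ∈ F.filter (fun A => Disjoint A Z ∧ A ∪ Z ∈ F),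
              (Nat.factorial m : ℝ) * ((1 / (m.choose Z.card : ℝ))
                  * (1 / ((m - Z.card).choose A.card : ℝ)))
              = ((Nat.factorial m : ℝ) * (1 / (m.choose Z.card : ℝ)))
                  * (1 / ((m - Z.card).choose A.card : ℝ)) := by
            intro A _; ring
          rw [Finset.sum_congr rfl hfac, ← Finset.mul_sum]
          have hb := hrel_bound hd hdm (fun m' h G hG => IH hd m' h G hG) F hF Z hZne
          have hnn : (0:ℝ) ≤ (Nat.factorial m : ℝ) * (1 / (m.choose Z.card : ℝ)) := by
            positivity
          calc ((Nat.factorial m : ℝ) * (1 / (m.choose Z.card : ℝ)))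
                * ∑ A ∈ F.filter (fun A => Disjoint A Z ∧ A ∪ Z ∈ F),
                    (1 / ((m - Z.card).choose A.card : ℝ))
              ≤ ((Nat.factorial m : ℝ) * (1 / (m.choose Z.card : ℝ))) * lam :=
                mul_le_mul_of_nonneg_left hb hnn
            _ = (Nat.factorial m : ℝ) * ((1 / (m.choose Z.card : ℝ)) * lam) := by ring
        calc ∑ Z ∈ (univ : Finset (Finset (Fin m))).filter (fun Z => Z.Nonempty),
              ∑ A ∈ F.filter (fun A => Disjoint A Z ∧ A ∪ Z ∈ F),
                (Nat.factorial A.card *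
                  (Nat.factorial Z.card * Nat.factorial (m - (A.card + Z.card))) : ℝ)
            ≤ ∑ Z ∈ (univ : Finset (Finset (Fin m))).filter (fun Z => Z.Nonempty),
              (Nat.factorial m : ℝ) * ((1 / (m.choose Z.card : ℝ)) * lam) :=
              Finset.sum_le_sum hterm
          _ = (Nat.factorial m : ℝ) * lam
              * ∑ Z ∈ (univ : Finset (Finset (Fin m))).filter (fun Z => Z.Nonempty),
                  (1 / (m.choose Z.card : ℝ)) := by
              rw [Finset.mul_sum]
              apply Finset.sum_congr rfl
              intro Z _; ring
          _ = (Nat.factorial m : ℝ) * (m * lam) := by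
              rw [NE_sum]; ring
      linarith
    -- Cauchy-Schwarz
    have hCS := sq_sum_le_card_mul_sum_sq
      (s := (univ : Finset (Equiv.Perm (Fin m)))) (f := fun σ => (f σ : ℝ))
    rw [hNfac, hsum1] at hCS
    have hsq : ∀ σ : Equiv.Perm (Fin m), ((f σ : ℝ))^2 = (f σ : ℝ) * (f σ : ℝ) := by
      intro σ; ring
    rw [Finset.sum_congr rfl (fun σ _ => hsq σ)] at hCS
    have hquad : h^2 - h ≤ 2 * m * lam := by
      have h2 := le_trans hCS (mul_le_mul_of_nonneg_left hsum2 (le_of_lt hfacpos))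
      have hexp : ((Nat.factorial m : ℝ) * h)^2
          = (Nat.factorial m : ℝ)^2 * h^2 := by ring
      rw [hexp] at h2
      have h3 : (Nat.factorial m : ℝ)^2 * h^2
          ≤ (Nat.factorial m : ℝ)^2 * (h + 2 * m * lam) := by
        calc (Nat.factorial m : ℝ)^2 * h^2 ≤ _ := h2
          _ = (Nat.factorial m : ℝ)^2 * (h + 2 * m * lam) := by ring
      have h4 : h^2 ≤ h + 2 * m * lam :=
        le_of_mul_le_mul_left h3 (by positivity)
      linarith
    have := le_alpha_of_quad hd (by
      calc h^2 - h ≤ 2 * m * lam := hquad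
        _ = 2 * (m:ℝ) * alpha m d := by rw [hlam])
    exact this
end P10
section P11
variable {n : ℕ}

lemma shift_free {d : ℕ} (A₀ B₀ : Finset (Fin n)) (F : Finset (Finset (Fin n)))
    (hF : ¬ ContainsBD n d F) :
    ¬ ContainsBD n d ((F.filter (fun A => A₀ ⊆ A ∧ A ⊆ B₀)).image (fun A => A \ A₀)) := by
  classical
  intro hcon
  apply hF
  obtain ⟨Y₀, Y, hne, hd0, hdp, hmem⟩ := hcon
  have hget : ∀ I : Finset (Fin d), ∃ A ∈ F, A₀ ⊆ A ∧ A ⊆ B₀ ∧ A \ A₀ = Y₀ ∪ I.biUnion Y := by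
    intro I
    obtain ⟨A, hA, hAe⟩ := Finset.mem_image.mp (hmem I)
    rw [Finset.mem_filter] at hA
    exact ⟨A, hA.1, hA.2.1, hA.2.2, hAe⟩
  have hY_disj_A₀ : ∀ i, Disjoint A₀ (Y i) := by
    intro i
    obtain ⟨A, hAF, hA₀, hAB, hAe⟩ := hget Finset.univ
    have h1 : Y i ⊆ A \ A₀ := by
      rw [hAe]
      exact le_trans (Finset.subset_biUnion_of_mem Y (Finset.mem_univ i))
        Finset.subset_union_right
    exact Finset.disjoint_left.mpr
      (fun x hx hxY => (Finset.mem_sdiff.mp (h1 hxY)).2 hx)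
  refine ⟨A₀ ∪ Y₀, Y, hne, ?_, hdp, ?_⟩
  · intro i
    rw [Finset.disjoint_union_left]
    exact ⟨hY_disj_A₀ i, hd0 i⟩
  · intro I
    obtain ⟨A, hAF, hA₀, hAB, hAe⟩ := hget I
    have : A₀ ∪ Y₀ ∪ I.biUnion Y = A := by
      rw [Finset.union_assoc, ← hAe, Finset.union_sdiff_of_subset hA₀]
    rw [this]
    exact hAF

lemma interval_bound {d : ℕ} (hd : 1 ≤ d) (A₀ B₀ : Finset (Fin n)) (hsub : A₀ ⊆ B₀)
    (F : Finset (Finset (Fin n))) (hF : ¬ ContainsBD n d F)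
    (hgap : d ≤ B₀.card - A₀.card) :
    ∑ A ∈ F.filter (fun A => A₀ ⊆ A ∧ A ⊆ B₀),
      (1 / (((B₀.card - A₀.card).choose (A.card - A₀.card)) : ℝ))
      ≤ alpha (B₀.card - A₀.card) d := by
  classical
  set m' := B₀.card - A₀.card with hm'
  set Fint := F.filter (fun A => A₀ ⊆ A ∧ A ⊆ B₀) with hFint
  set G := Fint.image (fun A => A \ A₀) with hG
  have hGfree : ¬ ContainsBD n d G := shift_free A₀ B₀ F hF
  have hGS : ∀ Y ∈ G, Y ⊆ B₀ \ A₀ := by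
    intro Y hY
    obtain ⟨A, hA, rfl⟩ := Finset.mem_image.mp hY
    rw [hFint, Finset.mem_filter] at hA
    exact Finset.sdiff_subset_sdiff hA.2.2 (Finset.Subset.refl _)
  have hScard : (B₀ \ A₀).card = m' := Finset.card_sdiff_of_subset hsub
  have hinj : Set.InjOn (fun A => A \ A₀) Fint := by
    intro A hA A' hA' he
    rw [hFint, Finset.coe_filter, Set.mem_setOf_eq] at hA hA'
    have h1 : A₀ ∪ (A \ A₀) = A := Finset.union_sdiff_of_subset hA.2.1
    have h2 : A₀ ∪ (A' \ A₀) = A' := Finset.union_sdiff_of_subset hA'.2.1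
    rw [← h1, ← h2]
    simp only at he
    rw [he]
  have hsum : ∑ Y ∈ G, (1 / ((m'.choose Y.card) : ℝ))
      = ∑ A ∈ Fint, (1 / ((m'.choose (A.card - A₀.card)) : ℝ)) := by
    rw [hG, Finset.sum_image (fun A hA A' hA' h => hinj hA hA' h)]
    apply Finset.sum_congr rfl
    intro A hA
    rw [hFint, Finset.mem_filter] at hA
    rw [Finset.card_sdiff_of_subset hA.2.1]
  rw [← hsum]
  exact subset_bound (fun G' hG' => cube_bound d hd m' hgap G' hG') (B₀ \ A₀) hScard G hGS hGfree

end P11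
section P12
variable {n : ℕ}

lemma cnt_pairs {a b : ℕ} (A : Finset (Fin n)) (hak : a ≤ A.card) (hkb : A.card ≤ b) :
    ((((univ : Finset (Fin n)).powersetCard a ×ˢ (univ : Finset (Fin n)).powersetCard b).filter
        (fun q => q.1 ⊆ q.2)).filter (fun q => q.1 ⊆ A ∧ A ⊆ q.2)).card
      = (A.card.choose a) * ((n - A.card).choose (b - A.card)) := by
  classical
  have hcompl : (Aᶜ : Finset (Fin n)).card = n - A.card := by
    rw [Finset.card_compl, Fintype.card_fin]
  rw [show (A.card.choose a) * ((n - A.card).choose (b - A.card))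
      = ((A.powersetCard a) ×ˢ (Aᶜ.powersetCard (b - A.card))).card by
    rw [Finset.card_product, Finset.card_powersetCard, Finset.card_powersetCard, hcompl]]
  apply Finset.card_nbij' (i := fun q => (q.1, q.2 \ A)) (j := fun r => (r.1, A ∪ r.2))
  · intro q hq
    simp only [Finset.mem_coe, Finset.mem_filter, Finset.mem_product, Finset.mem_powersetCard] at hq
    obtain ⟨⟨⟨⟨-, hq1c⟩, ⟨-, hq2c⟩⟩, -⟩, hq1A, hAq2⟩ := hq
    simp only [Finset.mem_coe, Finset.mem_product, Finset.mem_powersetCard]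
    refine ⟨⟨hq1A, hq1c⟩, ?_, ?_⟩
    · intro x hx
      rw [Finset.mem_compl]
      exact (Finset.mem_sdiff.mp hx).2
    · rw [Finset.card_sdiff_of_subset hAq2, hq2c]
  · intro r hr
    simp only [Finset.mem_coe, Finset.mem_product, Finset.mem_powersetCard] at hr
    obtain ⟨⟨hr1A, hr1c⟩, hr2c, hr2card⟩ := hr
    have hdisj : Disjoint A r.2 := by
      rw [Finset.disjoint_left]
      intro x hx hx2
      exact (Finset.mem_compl.mp (hr2c hx2)) hx
    simp only [Finset.mem_coe, Finset.mem_filter, Finset.mem_product, Finset.mem_powersetCard]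
    refine ⟨⟨⟨⟨Finset.subset_univ _, hr1c⟩, Finset.subset_univ _, ?_⟩, ?_⟩, ?_, ?_⟩
    · rw [Finset.card_union_of_disjoint hdisj, hr2card]
      omega
    · exact le_trans hr1A Finset.subset_union_left
    · exact hr1A
    · exact Finset.subset_union_left
  · intro q hq
    simp only [Finset.mem_coe, Finset.mem_filter] at hq
    have := hq.2.2
    ext x
    · rfl
    · simp [Finset.union_sdiff_of_subset this]
  · intro r hr
    simp only [Finset.mem_coe, Finset.mem_product, Finset.mem_powersetCard] at hr
    have hdisj : Disjoint A r.2 := by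
      rw [Finset.disjoint_left]
      intro x hx hx2
      exact (Finset.mem_compl.mp (hr.2.1 hx2)) hx
    ext x
    · rfl
    · simp [Finset.union_sdiff_cancel_left hdisj]

lemma card_pairs {a b : ℕ} :
    ((((univ : Finset (Fin n)).powersetCard a ×ˢ (univ : Finset (Fin n)).powersetCard b).filter
        (fun q => q.1 ⊆ q.2)).card) = (n.choose b) * (b.choose a) := by
  classical
  have hP : (((univ : Finset (Fin n)).powersetCard a ×ˢ (univ : Finset (Fin n)).powersetCard b).filter
        (fun q => q.1 ⊆ q.2))
      = ((univ : Finset (Fin n)).powersetCard b).biUnion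
          (fun B₀ => (B₀.powersetCard a).image (fun A₀ => (A₀, B₀))) := by
    ext q
    simp only [Finset.mem_filter, Finset.mem_product, Finset.mem_powersetCard,
      Finset.mem_biUnion, Finset.mem_image]
    constructor
    · rintro ⟨⟨⟨-, hq1c⟩, -, hq2c⟩, hsub⟩
      exact ⟨q.2, ⟨Finset.subset_univ _, hq2c⟩, q.1, ⟨hsub, hq1c⟩, by
        rw [Prod.ext_iff]; exact ⟨rfl, rfl⟩⟩
    · rintro ⟨B₀, ⟨-, hB₀c⟩, A₀, ⟨hA₀B, hA₀c⟩, heq⟩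
      obtain ⟨h1, h2⟩ := Prod.ext_iff.mp heq
      subst h1; subst h2
      exact ⟨⟨⟨Finset.subset_univ _, hA₀c⟩, Finset.subset_univ _, hB₀c⟩, hA₀B⟩
  rw [hP, Finset.card_biUnion]
  · have : ∀ B₀ ∈ (univ : Finset (Fin n)).powersetCard b,
        ((B₀.powersetCard a).image (fun A₀ => (A₀, B₀))).card = b.choose a := by
      intro B₀ hB₀
      rw [Finset.card_image_of_injective _ (fun x y h => (Prod.ext_iff.mp h).1),
        Finset.card_powersetCard, (Finset.mem_powersetCard.mp hB₀).2]
    rw [Finset.sum_congr rfl this, Finset.sum_const, Finset.card_powersetCard,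
      Finset.card_univ, Fintype.card_fin, smul_eq_mul]
  · intro x hx y hy hxy
    simp only [Function.onFun]
    rw [Finset.disjoint_left]
    rintro q hqx hqy
    obtain ⟨w, -, hq2⟩ := Finset.mem_image.mp hqx
    obtain ⟨w', -, hq2'⟩ := Finset.mem_image.mp hqy
    apply hxy
    have h1 := (Prod.ext_iff.mp hq2).2
    have h2 := (Prod.ext_iff.mp hq2').2
    simp only at h1 h2
    exact h1.trans h2.symm

lemma choose_identity {a k b n : ℕ} (hak : a ≤ k) (hkb : k ≤ b) (hbn : b ≤ n) :
    ((k.choose a : ℝ) * ((n - k).choose (b - k) : ℝ)) * (1 / (((b - a).choose (k - a)) : ℝ))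
      = ((n.choose b : ℝ) * (b.choose a : ℝ)) * (1 / ((n.choose k) : ℝ)) := by
  have e1 : (n - k) - (b - k) = n - b := by omega
  have e2 : (b - a) - (k - a) = b - k := by omega
  rw [Nat.cast_choose ℝ hak, Nat.cast_choose ℝ (show b - k ≤ n - k by omega),
    Nat.cast_choose ℝ (show k - a ≤ b - a by omega), Nat.cast_choose ℝ hbn,
    Nat.cast_choose ℝ (le_trans hak hkb), Nat.cast_choose ℝ (le_trans hkb hbn),
    e1, e2]
  have l1 : (0:ℝ) < Nat.factorial a := by exact_mod_cast Nat.factorial_pos a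
  have l2 : (0:ℝ) < Nat.factorial (k - a) := by exact_mod_cast Nat.factorial_pos _
  have l3 : (0:ℝ) < Nat.factorial (b - k) := by exact_mod_cast Nat.factorial_pos _
  have l4 : (0:ℝ) < Nat.factorial (n - b) := by exact_mod_cast Nat.factorial_pos _
  have l5 : (0:ℝ) < Nat.factorial k := by exact_mod_cast Nat.factorial_pos _
  have l6 : (0:ℝ) < Nat.factorial (n - k) := by exact_mod_cast Nat.factorial_pos _
  have l7 : (0:ℝ) < Nat.factorial b := by exact_mod_cast Nat.factorial_pos _
  have l8 : (0:ℝ) < Nat.factorial (b - a) := by exact_mod_cast Nat.factorial_pos _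
  have l9 : (0:ℝ) < Nat.factorial n := by exact_mod_cast Nat.factorial_pos _
  field_simp

end P12
theorem lubell_band_bound (n d a b : ℕ) (hd : 1 ≤ d) (hab : a ≤ b) (hbn : b ≤ n)
    (hgap : d ≤ b - a) (F : Finset (Finset (Fin n))) (hF : ¬ ContainsBD n d F) :
    lubell n (F.filter (fun A => a ≤ A.card ∧ A.card ≤ b)) ≤ alpha (b - a) d := by
  classical
  set P := (((univ : Finset (Fin n)).powersetCard a ×ˢ
      (univ : Finset (Fin n)).powersetCard b).filter (fun q => q.1 ⊆ q.2)) with hP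
  set w : Finset (Fin n) → ℝ := fun A => 1 / (((b - a).choose (A.card - a)) : ℝ) with hw
  set Fab := F.filter (fun A => a ≤ A.card ∧ A.card ≤ b) with hFab
  set T : ℝ := ((n.choose b : ℝ) * (b.choose a : ℝ)) with hT
  have hTpos : 0 < T := by
    rw [hT]
    have h1 : 0 < (n.choose b : ℝ) := by exact_mod_cast Nat.choose_pos hbn
    have h2 : 0 < (b.choose a : ℝ) := by exact_mod_cast Nat.choose_pos hab
    positivity
  -- each interval contributes at most alpha
  have hint : ∀ q ∈ P, ∑ A ∈ F.filter (fun A => q.1 ⊆ A ∧ A ⊆ q.2), w A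
      ≤ alpha (b - a) d := by
    intro q hq
    rw [hP, Finset.mem_filter, Finset.mem_product] at hq
    obtain ⟨⟨hq1, hq2⟩, hsub⟩ := hq
    have hq1c : q.1.card = a := (Finset.mem_powersetCard.mp hq1).2
    have hq2c : q.2.card = b := (Finset.mem_powersetCard.mp hq2).2
    have := interval_bound hd q.1 q.2 hsub F hF (by rw [hq1c, hq2c]; exact hgap)
    rw [hq1c, hq2c] at this
    exact this
  -- swap the double sum
  have hswap : ∑ q ∈ P, ∑ A ∈ F.filter (fun A => q.1 ⊆ A ∧ A ⊆ q.2), w A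
      = ∑ A ∈ F, ((P.filter (fun q => q.1 ⊆ A ∧ A ⊆ q.2)).card : ℝ) * w A := by
    have h1 : ∀ q ∈ P, ∑ A ∈ F.filter (fun A => q.1 ⊆ A ∧ A ⊆ q.2), w A
        = ∑ A ∈ F, if (q.1 ⊆ A ∧ A ⊆ q.2) then w A else 0 := by
      intro q _
      exact Finset.sum_filter _ _
    rw [Finset.sum_congr rfl h1, Finset.sum_comm]
    apply Finset.sum_congr rfl
    intro A _
    rw [← Finset.sum_filter, Finset.sum_const, nsmul_eq_mul]
  -- value on the band
  have hval : ∀ A ∈ Fab, ((P.filter (fun q => q.1 ⊆ A ∧ A ⊆ q.2)).card : ℝ) * w A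
      = T * (1 / (n.choose A.card : ℝ)) := by
    intro A hA
    rw [hFab, Finset.mem_filter] at hA
    obtain ⟨-, hak, hkb⟩ := hA
    rw [hP, cnt_pairs A hak hkb, hw, hT]
    push_cast
    exact choose_identity hak hkb hbn
  -- assemble
  have hupper : ∑ q ∈ P, ∑ A ∈ F.filter (fun A => q.1 ⊆ A ∧ A ⊆ q.2), w A
      ≤ T * alpha (b - a) d := by
    calc ∑ q ∈ P, ∑ A ∈ F.filter (fun A => q.1 ⊆ A ∧ A ⊆ q.2), w A
        ≤ ∑ _q ∈ P, alpha (b - a) d := Finset.sum_le_sum hint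
      _ = (P.card : ℝ) * alpha (b - a) d := by rw [Finset.sum_const, nsmul_eq_mul]
      _ = T * alpha (b - a) d := by rw [hP, card_pairs, hT]; push_cast; ring
  have hlower : T * lubell n Fab ≤ ∑ q ∈ P, ∑ A ∈ F.filter (fun A => q.1 ⊆ A ∧ A ⊆ q.2), w A := by
    rw [hswap]
    calc T * lubell n Fab = ∑ A ∈ Fab, T * (1 / (n.choose A.card : ℝ)) := by
          rw [lubell, Finset.mul_sum]
      _ = ∑ A ∈ Fab, ((P.filter (fun q => q.1 ⊆ A ∧ A ⊆ q.2)).card : ℝ) * w A :=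
          (Finset.sum_congr rfl hval).symm
      _ ≤ ∑ A ∈ F, ((P.filter (fun q => q.1 ⊆ A ∧ A ⊆ q.2)).card : ℝ) * w A := by
          apply Finset.sum_le_sum_of_subset_of_nonneg (Finset.filter_subset _ _)
          intro A _ _
          have h1 : (0:ℝ) ≤ ((P.filter (fun q => q.1 ⊆ A ∧ A ⊆ q.2)).card : ℝ) := by
            positivity
          have h2 : (0:ℝ) ≤ w A := by rw [hw]; positivity
          exact mul_nonneg h1 h2
  have := le_trans hlower hupper
  exact le_of_mul_le_mul_left this hTpos
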